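/- Let p > 1 be an integer and X a finite set of distinct non-negative integers. For L ≥ 0, let h_L(X) be the number of hooks of λ(X) with length divisible by p^L, and let t_L(X) = h_L(X) − p·h_{L+1}(X). Then t_L(X) ≥ 0 for all L, and ∑_{L ≥ 0} t_L(X) p^L = |λ(X)|, the number of cells of λ(X). -/

import Mathlib

open Finset

/-- The number of hooks of `λ(X)` with length divisible by `d`. -/
def cnt (d : ℕ) (X : Finset ℕ) : ℕ :=
  ∑ x ∈ X, ((Finset.range x).filter fun y => y ∉ X ∧ d ∣ x - y).card

/-- number of `y < x` with `d ∣ x - y` is `x / d`. -/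
lemma card_range_dvd (d x : ℕ) :
    ((Finset.range x).filter fun y => d ∣ x - y).card = x / d := by
  rw [← Nat.Ioc_filter_dvd_card_eq_div x d]
  apply Finset.card_bij (fun y _ => x - y)
  · intro y hy
    simp only [mem_filter, mem_range] at hy
    simp only [mem_filter, mem_Ioc]
    omega
  · intro a ha b hb h
    simp only [mem_filter, mem_range] at ha hb
    omega
  · intro z hz
    simp only [mem_filter, mem_Ioc] at hz
    refine ⟨x - z, ?_, by omega⟩
    simp only [mem_filter, mem_range]
    have : x - (x - z) = z := by omega
    rw [this]
    exact ⟨by omega, hz.2⟩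

/-- sum over a finset of the number of smaller elements is `choose 2`. -/
lemma sum_card_lt (s : Finset ℕ) :
    ∑ x ∈ s, (s.filter (· < x)).card = s.card.choose 2 := by
  induction s using Finset.induction with
  | empty => simp
  | @insert a s ha ih =>
    rw [Finset.sum_insert ha, Finset.card_insert_of_notMem ha]
    have h1 : ∀ x ∈ s, ((insert a s).filter (· < x)).card
        = (s.filter (· < x)).card + (if a < x then 1 else 0) := by
      intro x hx
      by_cases hax : a < x
      · rw [Finset.filter_insert, if_pos hax, if_pos hax,
          Finset.card_insert_of_notMem (fun h => ha (Finset.mem_filter.1 h).1)]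
      · rw [Finset.filter_insert, if_neg hax, if_neg hax, Nat.add_zero]
    rw [Finset.sum_congr rfl h1, Finset.sum_add_distrib, ih]
    have h2 : ((insert a s).filter (· < a)).card = (s.filter (· < a)).card := by
      rw [Finset.filter_insert]; simp
    rw [h2, Finset.sum_boole]
    push_cast
    have h3 : (s.filter (· < a)).card + (s.filter (fun x => a < x)).card = s.card := by
      rw [← Finset.card_union_of_disjoint]
      · congr 1
        ext x; simp only [Finset.mem_union, Finset.mem_filter]
        constructor
        · rintro (⟨h,_⟩|⟨h,_⟩) <;> exact h
        · intro hx
          rcases Nat.lt_trichotomy x a with h|h|h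
          · exact Or.inl ⟨hx, h⟩
          · exact absurd (h ▸ hx) ha
          · exact Or.inr ⟨hx, h⟩
      · rw [Finset.disjoint_filter]
        intro x _ h1 h2; omega
    have h4 : (s.card + 1).choose 2 = s.card.choose 2 + s.card := by
      rw [Nat.choose_two_right, Nat.choose_two_right]
      have := Nat.triangle_succ s.card
      omega
    omega

def Bc (d : ℕ) (X : Finset ℕ) : ℕ :=
  ∑ x ∈ X, ((Finset.range x).filter fun y => y ∈ X ∧ d ∣ x - y).card

lemma cnt_add_B (d : ℕ) (X : Finset ℕ) :
    cnt d X + Bc d X = ∑ x ∈ X, x / d := by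
  rw [cnt, Bc, ← Finset.sum_add_distrib]
  refine Finset.sum_congr rfl fun x _ => ?_
  have h := Finset.card_filter_add_card_filter_not
    (s := (range x).filter fun y => d ∣ x - y) (p := fun y => y ∈ X)
  rw [Finset.filter_filter, Finset.filter_filter, card_range_dvd] at h
  rw [← h, add_comm]
  congr 1
  · congr 1; ext y; simp only [mem_filter, mem_range]; tauto
  · congr 1; ext y; simp only [mem_filter, mem_range]; tauto

/-- `Bc` counts pairs in `X` in the same residue class. -/
lemma B_eq (d : ℕ) (hd : 0 < d) (X : Finset ℕ) :
    Bc d X = ∑ r ∈ Finset.range d, ((X.filter fun z => z % d = r).card).choose 2 := by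
  have step1 : Bc d X = ∑ x ∈ X, ((X.filter fun y => y < x ∧ y % d = x % d).card) := by
    refine Finset.sum_congr rfl fun x hx => ?_
    congr 1
    ext y
    simp only [mem_filter, mem_range]
    constructor
    · rintro ⟨hy, hyX, hdvd⟩
      exact ⟨hyX, hy, ((Nat.modEq_iff_dvd' (le_of_lt hy)).2 hdvd : y % d = x % d)⟩
    · rintro ⟨hyX, hy, hmod⟩
      exact ⟨hy, hyX, (Nat.modEq_iff_dvd' (le_of_lt hy)).1 (hmod : Nat.ModEq d y x)⟩
  rw [step1]
  rw [← Finset.sum_fiberwise_of_maps_to (g := fun x => x % d) (t := range d)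
    (fun x _ => Finset.mem_range.2 (Nat.mod_lt x hd))]
  refine Finset.sum_congr rfl fun r hr => ?_
  have inner : ∀ x ∈ X.filter (fun z => z % d = r),
      (X.filter fun y => y < x ∧ y % d = x % d).card
        = ((X.filter fun z => z % d = r).filter (· < x)).card := by
    intro x hx
    rw [Finset.filter_filter]
    congr 1
    ext y
    simp only [mem_filter] at hx ⊢
    constructor
    · rintro ⟨h1, h2, h3⟩; exact ⟨h1, h3.trans hx.2, h2⟩
    · rintro ⟨h1, h2, h3⟩; exact ⟨h1, h3, h2.trans hx.2.symm⟩
  rw [Finset.sum_congr rfl inner, sum_card_lt]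

/-- removing a rim hook of length `q` decreases the number of hooks of length
divisible by `d` by exactly `q / d`, whenever `d ∣ q`. -/
lemma cnt_swap (d q x : ℕ) (hd : 0 < d) (hdq : d ∣ q) (X : Finset ℕ)
    (hx : x ∈ X) (hqx : q ≤ x) (hout : x - q ∉ X) :
    cnt d X = cnt d (insert (x - q) (X.erase x)) + q / d := by
  set X' := insert (x - q) (X.erase x) with hX'
  have hq : 0 < q := by
    rcases Nat.eq_zero_or_pos q with h | h
    · subst h; simp at hout; exact absurd hx hout
    · exact h
  have hne : x - q ∉ X.erase x := fun h => hout (Finset.mem_of_mem_erase h)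
  have hA : ∑ z ∈ X, z / d = (∑ z ∈ X', z / d) + q / d := by
    rw [hX', Finset.sum_insert hne, ← Finset.add_sum_erase X _ hx]
    have : x / d = (x - q) / d + q / d := by
      obtain ⟨k, rfl⟩ := hdq
      conv_lhs => rw [show x = (x - d * k) + d * k by omega]
      rw [Nat.add_mul_div_left _ _ hd, Nat.mul_div_cancel_left _ hd]
    omega
  have hmodeq : (x - q) % d = x % d := by
    obtain ⟨k, rfl⟩ := hdq
    conv_rhs => rw [show x = x - d * k + d * k by omega]
    rw [Nat.add_mul_mod_self_left]
  have hclass : ∀ r, (X'.filter fun z => z % d = r).card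
      = (X.filter fun z => z % d = r).card := by
    intro r
    rw [hX', Finset.filter_insert, Finset.filter_erase]
    by_cases hr : x % d = r
    · rw [if_pos (by rw [hmodeq, hr])]
      have hxm : x ∈ X.filter fun z => z % d = r := Finset.mem_filter.2 ⟨hx, hr⟩
      rw [Finset.card_insert_of_notMem
        (fun h => hout (Finset.mem_filter.1 (Finset.mem_of_mem_erase h)).1)]
      rw [Finset.card_erase_of_mem hxm]
      have := Finset.card_pos.2 ⟨x, hxm⟩
      omega
    · rw [if_neg (by rw [hmodeq]; exact hr)]
      have hxnot : x ∉ X.filter fun z => z % d = r :=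
        fun h => hr (Finset.mem_filter.1 h).2
      rw [Finset.erase_eq_of_notMem hxnot]
  have hB : Bc d X' = Bc d X := by
    rw [B_eq d hd, B_eq d hd]
    exact Finset.sum_congr rfl fun r _ => by rw [hclass r]
  have h1 := cnt_add_B d X
  have h2 := cnt_add_B d X'
  omega

/-- if some hook of length divisible by `q` exists, a removable `q`-hook exists. -/
lemma exists_removable (q : ℕ) (X : Finset ℕ) (h : 0 < cnt q X) :
    ∃ x ∈ X, q ≤ x ∧ x - q ∉ X := by
  rw [cnt] at h
  obtain ⟨x, hxX, hpos⟩ : ∃ x ∈ X,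
      0 < ((Finset.range x).filter fun y => y ∉ X ∧ q ∣ x - y).card := by
    by_contra hc
    push_neg at hc
    exact absurd (Finset.sum_eq_zero fun x hx => Nat.le_zero.1 (hc x hx)) (by omega)
  obtain ⟨y, hy⟩ := Finset.card_pos.1 hpos
  simp only [mem_filter, mem_range] at hy
  obtain ⟨hyx, hyX, hdvd⟩ := hy
  set S := X.filter (fun z => y < z ∧ z % q = y % q) with hS
  have hxS : x ∈ S := by
    refine Finset.mem_filter.2 ⟨hxX, hyx, ?_⟩
    exact ((Nat.modEq_iff_dvd' hyx.le).2 hdvd : y % q = x % q).symm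
  have hSne : S.Nonempty := ⟨x, hxS⟩
  set m := S.min' hSne with hm
  have hmS : m ∈ S := S.min'_mem hSne
  obtain ⟨hmX, hym, hmod⟩ := Finset.mem_filter.1 hmS
  have hqm : y + q ≤ m := by
    have hdm : q ∣ m - y := (Nat.modEq_iff_dvd' hym.le).1 (hmod.symm : Nat.ModEq q y m)
    have : m - y ≠ 0 := by omega
    have := Nat.le_of_dvd (by omega) hdm
    omega
  have hq0 : 0 < q := by
    rcases Nat.eq_zero_or_pos q with h | h
    · subst h; simp at hdvd; omega
    · exact h
  refine ⟨m, hmX, by omega, fun hmem => ?_⟩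
  have hmodq : (m - q) % q = m % q := by
    conv_rhs => rw [show m = (m - q) + q by omega]
    simp [Nat.add_mod_right]
  by_cases hyeq : m - q = y
  · exact hyX (hyeq ▸ hmem)
  · have hin : m - q ∈ S := Finset.mem_filter.2 ⟨hmem, by omega, by rw [hmodq, hmod]⟩
    have := S.min'_le _ hin
    omega

/-- key inequality -/
lemma key_ineq (p : ℕ) (hp : 1 < p) (L : ℕ) :
    ∀ k (X : Finset ℕ), cnt (p ^ (L + 1)) X ≤ k →
      p * cnt (p ^ (L + 1)) X ≤ cnt (p ^ L) X := by
  intro k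
  induction k with
  | zero => intro X hX; simp [Nat.le_zero.1 hX]
  | succ k ih =>
    intro X hX
    rcases Nat.eq_zero_or_pos (cnt (p ^ (L + 1)) X) with h0 | h0
    · simp [h0]
    · obtain ⟨x, hxX, hqx, hout⟩ := exists_removable _ X h0
      set q := p ^ (L + 1) with hq
      set X' := insert (x - q) (X.erase x) with hX'
      have hd : 0 < p ^ L := pow_pos (by omega) L
      have hdq : p ^ L ∣ q := pow_dvd_pow p (by omega)
      have e1 : cnt q X = cnt q X' + 1 := by
        have := cnt_swap q q x (by positivity) dvd_rfl X hxX hqx hout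
        rwa [Nat.div_self (by positivity)] at this
      have hqdiv : q / p ^ L = p := by
        rw [hq, pow_succ, Nat.mul_div_cancel_left _ hd]
      have e2 : cnt (p ^ L) X = cnt (p ^ L) X' + p := by
        have := cnt_swap (p ^ L) q x hd hdq X hxX hqx hout
        rwa [hqdiv] at this
      have e3 : p * cnt q X = p * cnt q X' + p := by
        rw [e1, Nat.mul_add, Nat.mul_one]
      have := ih X' (by omega)
      omega

lemma telescope (p : ℕ) (f : ℕ → ℕ) (hf : ∀ L, p * f (L + 1) ≤ f L) (N : ℕ) :
    (∑ L ∈ Finset.range N, (f L - p * f (L + 1)) * p ^ L) + f N * p ^ N = f 0 := by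
  induction N with
  | zero => simp
  | succ N ih =>
    rw [Finset.sum_range_succ, ← ih]
    have : (f N - p * f (N + 1)) * p ^ N + f (N + 1) * p ^ (N + 1) = f N * p ^ N := by
      have h2 : f (N + 1) * p ^ (N + 1) = p * f (N + 1) * p ^ N := by ring
      rw [Nat.sub_mul, h2]
      have h1 : p * f (N + 1) * p ^ N ≤ f N * p ^ N :=
        Nat.mul_le_mul_right _ (hf N)
      omega
    omega

/-- `hL p L X` is the number of hooks of `λ(X)` with length divisible by `p^L`:
hooks of `λ(X)` correspond bijectively to pairs `(x, y)` with `x ∈ X`, `0 ≤ y < x`,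
`y ∉ X`, with hook length `x - y`.  In particular `hL p 0 X` is the total number of
hooks, i.e. the number `|λ(X)|` of cells of `λ(X)`. -/
def hL (p L : ℕ) (X : Finset ℕ) : ℕ :=
  ∑ x ∈ X, ((Finset.range x).filter fun y => y ∉ X ∧ p ^ L ∣ x - y).card

lemma hL_eq_cnt (p L : ℕ) (X : Finset ℕ) : hL p L X = cnt (p ^ L) X := rfl

theorem stmt7 (p : ℕ) (hp : 1 < p) (X : Finset ℕ) :
    (∀ L, p * hL p (L + 1) X ≤ hL p L X) ∧
      ∑ L ∈ Finset.range (X.sup id + 1), (hL p L X - p * hL p (L + 1) X) * p ^ L =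
        hL p 0 X := by
  have hineq : ∀ L, p * hL p (L + 1) X ≤ hL p L X := by
    intro L
    rw [hL_eq_cnt, hL_eq_cnt]
    exact key_ineq p hp L _ X le_rfl
  refine ⟨hineq, ?_⟩
  set N := X.sup id + 1 with hN
  have hvanish : hL p N X = 0 := by
    rw [hL]
    refine Finset.sum_eq_zero fun x hx => ?_
    rw [Finset.card_eq_zero, Finset.filter_eq_empty_iff]
    rintro y hy ⟨hyX, hdvd⟩
    rw [Finset.mem_range] at hy
    have h1 : 0 < x - y := by omega
    have h2 : p ^ N ≤ x - y := Nat.le_of_dvd h1 hdvd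
    have h3 : x ≤ X.sup id := Finset.le_sup (f := id) hx
    have h4 : X.sup id < p ^ N := by
      calc X.sup id < 2 ^ (X.sup id) := Nat.lt_two_pow_self (n := X.sup id)
        _ ≤ 2 ^ N := Nat.pow_le_pow_right (by norm_num) (by omega)
        _ ≤ p ^ N := Nat.pow_le_pow_left (by omega) _
    omega
  have := telescope p (fun L => hL p L X) hineq N
  rw [hvanish] at this
  simpa using this
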